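/- Let w be a non-zero harmonic homogeneous polynomial on ℝ² of degree k ≥ 2. Then det D²w(p) < 0 for every p ∈ ℝ² with p ≠ (0,0). -/

import Mathlib

open Set Metric Topology Asymptotics MvPolynomial Matrix

/-- Partial derivative with respect to the first variable. -/
noncomputable def pdx (f : ℝ × ℝ → ℝ) (p : ℝ × ℝ) : ℝ :=
  deriv (fun x => f (x, p.2)) p.1

/-- Partial derivative with respect to the second variable. -/
noncomputable def pdy (f : ℝ × ℝ → ℝ) (p : ℝ × ℝ) : ℝ :=
  deriv (fun y => f (p.1, y)) p.2

/-- The Laplacian `Δu = u_xx + u_yy`. -/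
noncomputable def lap (f : ℝ × ℝ → ℝ) (p : ℝ × ℝ) : ℝ :=
  pdx (pdx f) p + pdy (pdy f) p

/-- The Hessian determinant `det D²u = u_xx u_yy - u_xy²`. -/
noncomputable def hessDet (f : ℝ × ℝ → ℝ) (p : ℝ × ℝ) : ℝ :=
  pdx (pdx f) p * pdy (pdy f) p - (pdx (pdy f) p) ^ 2

/-- The Jacobian `J[f,g] = f_x g_y - f_y g_x`. -/
noncomputable def jacDet (f g : ℝ × ℝ → ℝ) (p : ℝ × ℝ) : ℝ :=
  pdx f p * pdy g p - pdy f p * pdx g p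

private lemma degree_two (d : Fin 2 →₀ ℕ) : d.degree = d 0 + d 1 := by
  rw [Finsupp.degree, ← Fin.sum_univ_two (fun i => d i)]
  exact Finset.sum_subset (Finset.subset_univ _)
    (fun i _ hi => Finsupp.notMem_support_iff.mp hi)

private lemma X_mul_pderiv_monomial (i : Fin 2) (d : Fin 2 →₀ ℕ) (a : ℝ) :
    (X i : MvPolynomial (Fin 2) ℝ) * pderiv i (monomial d a) = monomial d (a * d i) := by
  rw [pderiv_monomial]
  rcases Nat.eq_zero_or_pos (d i) with h | h
  · simp [h]
  · have hle : Finsupp.single i 1 ≤ d := by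
      rwa [Finsupp.single_le_iff]
    rw [X, monomial_mul, one_mul, add_comm, tsub_add_cancel_of_le hle]

private lemma euler2 {k : ℕ} {p : MvPolynomial (Fin 2) ℝ} (hp : p.IsHomogeneous k) :
    X 0 * pderiv 0 p + X 1 * pderiv 1 p = (k : ℝ) • p := by
  have key : ∀ d ∈ p.support,
      X 0 * pderiv 0 (monomial d (coeff d p)) + X 1 * pderiv 1 (monomial d (coeff d p))
        = (k : ℝ) • monomial d (coeff d p) := by
    intro d hd
    have hdeg : d 0 + d 1 = k := by
      rw [← degree_two, Finsupp.degree_eq_weight_one]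
      exact hp (MvPolynomial.mem_support_iff.mp hd)
    rw [X_mul_pderiv_monomial, X_mul_pderiv_monomial, smul_monomial, ← map_add]
    congr 1
    rw [← hdeg]
    push_cast
    rw [smul_eq_mul]
    ring
  calc X 0 * pderiv 0 p + X 1 * pderiv 1 p
      = ∑ d ∈ p.support, (X 0 * pderiv 0 (monomial d (coeff d p))
          + X 1 * pderiv 1 (monomial d (coeff d p))) := by
        conv_lhs => rw [p.as_sum]
        rw [map_sum, map_sum, Finset.mul_sum, Finset.mul_sum, ← Finset.sum_add_distrib]
    _ = ∑ d ∈ p.support, (k : ℝ) • monomial d (coeff d p) := Finset.sum_congr rfl key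
    _ = (k : ℝ) • p := by rw [← Finset.smul_sum, ← p.as_sum]

private lemma pderiv_comm2 (i j : Fin 2) (p : MvPolynomial (Fin 2) ℝ) :
    pderiv i (pderiv j p) = pderiv j (pderiv i p) := by
  induction p using MvPolynomial.induction_on' with
  | add p q hp hq => simp [hp, hq]
  | monomial d a =>
    rcases eq_or_ne i j with rfl | hij
    · rfl
    · simp only [pderiv_monomial]
      have hji : ((d - Finsupp.single j 1 : Fin 2 →₀ ℕ)) i = d i := by
        rw [Finsupp.tsub_apply, Finsupp.single_apply, if_neg hij.symm, Nat.sub_zero]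
      have hij' : ((d - Finsupp.single i 1 : Fin 2 →₀ ℕ)) j = d j := by
        rw [Finsupp.tsub_apply, Finsupp.single_apply, if_neg hij, Nat.sub_zero]
      rw [hji, hij', tsub_tsub, tsub_tsub, add_comm (Finsupp.single j 1)]
      ring_nf

private lemma isHomog_pderiv {k : ℕ} {p : MvPolynomial (Fin 2) ℝ}
    (hp : p.IsHomogeneous (k + 1)) (i : Fin 2) : (pderiv i p).IsHomogeneous k := by
  conv_lhs => rw [p.as_sum]
  rw [map_sum]
  apply MvPolynomial.IsHomogeneous.sum
  intro d hd
  have hd01 : d 0 + d 1 = k + 1 := by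
    rw [← degree_two, Finsupp.degree_eq_weight_one]
    exact hp (MvPolynomial.mem_support_iff.mp hd)
  rw [pderiv_monomial]
  rcases Nat.eq_zero_or_pos (d i) with h | h
  · rw [h]
    simp only [Nat.cast_zero, mul_zero, map_zero]
    exact isHomogeneous_zero _ _ _
  · apply isHomogeneous_monomial
    have hi : i = 0 ∨ i = 1 := by fin_cases i; exacts [Or.inl rfl, Or.inr rfl]
    rw [degree_two, Finsupp.tsub_apply, Finsupp.tsub_apply]
    rcases hi with rfl | rfl <;> simp only [Finsupp.single_apply] <;> simp <;> omega

private lemma homog_zero_eq_C {p : MvPolynomial (Fin 2) ℝ} (hp : p.IsHomogeneous 0) :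
    p = C (coeff 0 p) := by
  ext d
  rcases eq_or_ne d 0 with rfl | hd
  · simp
  · rw [coeff_C, if_neg (Ne.symm hd)]
    by_contra hc
    exact hd (Finsupp.degree_eq_zero_iff d |>.mp
      (by rw [Finsupp.degree_eq_weight_one]; exact hp hc))

private lemma hasDerivAt_evalX (P : MvPolynomial (Fin 2) ℝ) (t c : ℝ) :
    HasDerivAt (fun x : ℝ => eval ![x, c] P) (eval ![t, c] (pderiv 0 P)) t := by
  induction P using MvPolynomial.induction_on with
  | C a => simpa using hasDerivAt_const t a
  | add p q hp hq => simp only [_root_.map_add]; exact hp.add hq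
  | mul_X p i hp =>
    have hi : i = 0 ∨ i = 1 := by fin_cases i; exacts [Or.inl rfl, Or.inr rfl]
    rcases hi with rfl | rfl
    · have := hp.mul (hasDerivAt_id t)
      simp only [_root_.map_mul, eval_X, pderiv_mul, pderiv_X_self, _root_.map_add, _root_.map_one, mul_one]
      simpa [Matrix.cons_val_zero, mul_comm, Pi.mul_def] using this
    · have := hp.mul_const c
      simp only [_root_.map_mul, eval_X, pderiv_mul, pderiv_X_of_ne (by decide : (1:Fin 2) ≠ 0),
        _root_.map_zero, mul_zero, add_zero, _root_.map_add]
      simpa [Matrix.cons_val_one, Matrix.head_cons] using this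

private lemma hasDerivAt_evalY (P : MvPolynomial (Fin 2) ℝ) (t c : ℝ) :
    HasDerivAt (fun y : ℝ => eval ![c, y] P) (eval ![c, t] (pderiv 1 P)) t := by
  induction P using MvPolynomial.induction_on with
  | C a => simpa using hasDerivAt_const t a
  | add p q hp hq => simp only [_root_.map_add]; exact hp.add hq
  | mul_X p i hp =>
    have hi : i = 0 ∨ i = 1 := by fin_cases i; exacts [Or.inl rfl, Or.inr rfl]
    rcases hi with rfl | rfl
    · have := hp.mul_const c
      simp only [_root_.map_mul, eval_X, pderiv_mul, pderiv_X_of_ne (by decide : (0:Fin 2) ≠ 1),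
        _root_.map_zero, mul_zero, add_zero, _root_.map_add]
      simpa [Matrix.cons_val_zero] using this
    · have := hp.mul (hasDerivAt_id t)
      simp only [_root_.map_mul, eval_X, pderiv_mul, pderiv_X_self, _root_.map_add, _root_.map_one, mul_one]
      simpa [Matrix.cons_val_one, Matrix.head_cons, mul_comm, Pi.mul_def] using this

private lemma smul_zero_cancel {r : ℝ} (hr : r ≠ 0) {p : MvPolynomial (Fin 2) ℝ}
    (h : r • p = 0) : p = 0 := by
  have h2 := congrArg (fun q => r⁻¹ • q) h
  simpa [smul_smul, inv_mul_cancel₀ hr] using h2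

private lemma cr_pair (k : ℕ) :
    ∀ u v : MvPolynomial (Fin 2) ℝ, u.IsHomogeneous k → v.IsHomogeneous k →
    pderiv 0 u = pderiv 1 v → pderiv 1 u = -pderiv 0 v → ¬(u = 0 ∧ v = 0) →
    ∀ x y : ℝ, ¬(x = 0 ∧ y = 0) →
    ¬(eval ![x, y] u = 0 ∧ eval ![x, y] v = 0) := by
  induction k with
  | zero =>
    rintro u v hu hv - - hnz x y - ⟨hu0, hv0⟩
    rw [homog_zero_eq_C hu, eval_C] at hu0
    rw [homog_zero_eq_C hv, eval_C] at hv0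
    exact hnz ⟨by rw [homog_zero_eq_C hu, hu0, map_zero],
               by rw [homog_zero_eq_C hv, hv0, map_zero]⟩
  | succ k ih =>
    rintro u v hu hv hcr1 hcr2 hnz x y hxy ⟨hu0, hv0⟩
    have hu' : (pderiv 0 u).IsHomogeneous k := isHomog_pderiv hu 0
    have hv' : (pderiv 0 v).IsHomogeneous k := isHomog_pderiv hv 0
    have c1 : pderiv 0 (pderiv 0 u) = pderiv 1 (pderiv 0 v) := by
      rw [hcr1, pderiv_comm2]
    have c2 : pderiv 1 (pderiv 0 u) = -pderiv 0 (pderiv 0 v) := by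
      rw [pderiv_comm2, hcr2, map_neg]
    have eu := euler2 hu
    have ev := euler2 hv
    have hk1 : ((k + 1 : ℕ) : ℝ) ≠ 0 := (Nat.cast_pos.mpr (Nat.succ_pos k)).ne'
    have nz' : ¬(pderiv 0 u = 0 ∧ pderiv 0 v = 0) := by
      rintro ⟨h1, h2⟩
      apply hnz
      constructor
      · have h0 : ((k + 1 : ℕ) : ℝ) • u = 0 := by
          rw [← eu, h1, hcr2, h2]; simp
        exact smul_zero_cancel hk1 h0
      · have h0 : ((k + 1 : ℕ) : ℝ) • v = 0 := by
          rw [← ev, h2, ← hcr1, h1]; simp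
        exact smul_zero_cancel hk1 h0
    set A := eval ![x, y] (pderiv 0 u) with hA
    set B := eval ![x, y] (pderiv 0 v) with hB
    have E1 : x * A - y * B = 0 := by
      have h := congrArg (eval ![x, y]) eu
      rw [_root_.map_add, _root_.map_mul, _root_.map_mul, eval_X, eval_X, MvPolynomial.smul_eval,
        hu0, mul_zero, hcr2, _root_.map_neg] at h
      simpa [hA, hB, sub_eq_add_neg, mul_comm] using h
    have E2 : x * B + y * A = 0 := by
      have h := congrArg (eval ![x, y]) ev
      rw [_root_.map_add, _root_.map_mul, _root_.map_mul, eval_X, eval_X, MvPolynomial.smul_eval,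
        hv0, mul_zero, ← hcr1] at h
      simpa [hA, hB] using h
    have hxy2 : (0:ℝ) < x ^ 2 + y ^ 2 := by
      rcases not_and_or.mp hxy with h | h <;> positivity
    have hA0 : A = 0 := by
      have h : (x ^ 2 + y ^ 2) * A = 0 := by linear_combination x * E1 + y * E2
      rcases mul_eq_zero.mp h with h | h
      exacts [absurd h hxy2.ne', h]
    have hB0 : B = 0 := by
      have h : (x ^ 2 + y ^ 2) * B = 0 := by linear_combination x * E2 - y * E1
      rcases mul_eq_zero.mp h with h | h
      exacts [absurd h hxy2.ne', h]
    exact ih (pderiv 0 u) (pderiv 0 v) hu' hv' c1 c2 nz' x y hxy ⟨hA0, hB0⟩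

/-- If `w` is a non-zero harmonic homogeneous polynomial on `ℝ²` of degree `k ≥ 2`, then
`det D²w < 0` away from the origin. -/
theorem harmonic_homogeneous_hessian_negative
    (k : ℕ) (hk : 2 ≤ k)
    (w : MvPolynomial (Fin 2) ℝ) (hw : w ≠ 0) (hwhom : w.IsHomogeneous k)
    (hwharm : ∀ p : ℝ × ℝ,
      lap (fun q : ℝ × ℝ => MvPolynomial.eval ![q.1, q.2] w) p = 0) :
    ∀ p : ℝ × ℝ, p ≠ (0, 0) →
      hessDet (fun q : ℝ × ℝ => MvPolynomial.eval ![q.1, q.2] w) p < 0 := by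
  have pdx_eval : ∀ P : MvPolynomial (Fin 2) ℝ,
      pdx (fun q : ℝ × ℝ => eval ![q.1, q.2] P)
        = fun p : ℝ × ℝ => eval ![p.1, p.2] (pderiv 0 P) := by
    intro P
    funext p
    simpa [pdx] using (hasDerivAt_evalX P p.1 p.2).deriv
  have pdy_eval : ∀ P : MvPolynomial (Fin 2) ℝ,
      pdy (fun q : ℝ × ℝ => eval ![q.1, q.2] P)
        = fun p : ℝ × ℝ => eval ![p.1, p.2] (pderiv 1 P) := by
    intro P
    funext p
    simpa [pdy] using (hasDerivAt_evalY P p.2 p.1).deriv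
  obtain ⟨m, rfl⟩ : ∃ m, k = m + 2 := ⟨k - 2, by omega⟩
  -- the polynomial Laplace equation
  have H : pderiv 0 (pderiv 0 w) + pderiv 1 (pderiv 1 w) = 0 := by
    apply MvPolynomial.funext
    intro x
    have hx : ![x 0, x 1] = x := by
      funext i; fin_cases i <;> rfl
    have h := hwharm (x 0, x 1)
    rw [lap, pdx_eval w, pdx_eval _, pdy_eval w, pdy_eval _] at h
    simp only at h
    rw [map_add, map_zero, ← hx]
    simpa using h
  have h11 : pderiv 1 (pderiv 1 w) = -(pderiv 0 (pderiv 0 w)) := by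
    linear_combination H
  have h0 : (pderiv 0 w).IsHomogeneous (m + 1) := isHomog_pderiv hwhom 0
  have h1 : (pderiv 1 w).IsHomogeneous (m + 1) := isHomog_pderiv hwhom 1
  have h00 : (pderiv 0 (pderiv 0 w)).IsHomogeneous m := isHomog_pderiv h0 0
  have h01 : (pderiv 0 (pderiv 1 w)).IsHomogeneous m := isHomog_pderiv h1 0
  have hvneg : (-(pderiv 0 (pderiv 1 w))).IsHomogeneous m := fun d hd =>
    h01 (by rwa [MvPolynomial.coeff_neg, neg_ne_zero] at hd)
  have c1 : pderiv 0 (pderiv 0 (pderiv 0 w)) = pderiv 1 (-(pderiv 0 (pderiv 1 w))) := by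
    rw [map_neg, pderiv_comm2 1 0, h11, map_neg, neg_neg]
  have c2 : pderiv 1 (pderiv 0 (pderiv 0 w)) = -pderiv 0 (-(pderiv 0 (pderiv 1 w))) := by
    rw [map_neg, neg_neg, pderiv_comm2 1 0, pderiv_comm2 1 0]
  have hm1 : ((m + 1 : ℕ) : ℝ) ≠ 0 := (Nat.cast_pos.mpr (Nat.succ_pos m)).ne'
  have hm2 : ((m + 2 : ℕ) : ℝ) ≠ 0 := (Nat.cast_pos.mpr (Nat.succ_pos (m + 1))).ne'
  have nz : ¬(pderiv 0 (pderiv 0 w) = 0 ∧ -(pderiv 0 (pderiv 1 w)) = 0) := by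
    rintro ⟨ha, hb⟩
    rw [neg_eq_zero] at hb
    have h10 : pderiv 1 (pderiv 0 w) = 0 := by rw [pderiv_comm2]; exact hb
    have hbb : pderiv 1 (pderiv 1 w) = 0 := by rw [h11, ha, neg_zero]
    have e0 := euler2 h0
    rw [ha, h10, mul_zero, mul_zero, add_zero] at e0
    have hd0 : pderiv 0 w = 0 := smul_zero_cancel hm1 e0.symm
    have e1 := euler2 h1
    rw [hb, hbb, mul_zero, mul_zero, add_zero] at e1
    have hd1 : pderiv 1 w = 0 := smul_zero_cancel hm1 e1.symm
    have ew := euler2 hwhom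
    rw [hd0, hd1, mul_zero, mul_zero, add_zero] at ew
    exact hw (smul_zero_cancel hm2 ew.symm)
  intro p hp
  have hxy : ¬(p.1 = 0 ∧ p.2 = 0) := by
    rintro ⟨hx1, hx2⟩
    exact hp (Prod.ext hx1 hx2)
  have key := cr_pair m _ _ h00 hvneg c1 c2 nz p.1 p.2 hxy
  set A := eval ![p.1, p.2] (pderiv 0 (pderiv 0 w)) with hAdef
  set B := eval ![p.1, p.2] (pderiv 0 (pderiv 1 w)) with hBdef
  have hAB : ¬(A = 0 ∧ B = 0) := by
    rintro ⟨ha, hb⟩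
    exact key ⟨ha, by rw [map_neg, ← hBdef, hb, neg_zero]⟩
  have hcalc : hessDet (fun q : ℝ × ℝ => eval ![q.1, q.2] w) p = A * (-A) - B ^ 2 := by
    rw [hessDet, pdx_eval w, pdy_eval w, pdx_eval _, pdy_eval _, pdx_eval _]
    simp only
    rw [h11, _root_.map_neg]
  rw [hcalc]
  rcases not_and_or.mp hAB with h | h <;>
    nlinarith [mul_self_pos.mpr h, sq_nonneg A, sq_nonneg B]
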